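/- For any partition μ and positive integers d, m, the product p_μ(x) · p_{dm}(x) of power-sum symmetric functions equals p_ν(x), where ν is μ with one additional part equal to dm inserted; consequently in the polysymmetric ring, multiplying a pure tensor power-sum basis element p_σ^⊗ by P_{d^m} yields Σ_{k|d} k · p_τ(k)^⊗, where τ(k) is the type obtained from σ by inserting a new part of size dm/k into the partition σ|_k. -/

import Mathlib

open Classical

/- Single-indexed variables `x_j` (j : ℕ) for classical symmetric functions, and
doubly-indexed variables `x_{k,j}` ((k,j) : ℕ+ × ℕ, with `deg x_{k,j} = k`) for
polysymmetric functions. -/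

/-- The power-sum symmetric function `p_n = Σ_j x_j^n`. -/
noncomputable def pS (n : ℕ) : MvPowerSeries ℕ ℚ :=
  fun d => if ∃ j, d = Finsupp.single j n then 1 else 0

/-- `p_n(x_{k*}) = Σ_{j≥1} x_{k,j}^n`, the power sum in the variables `x_{k,*}`. -/
noncomputable def pIn (k : ℕ+) (n : ℕ) : MvPowerSeries (ℕ+ × ℕ) ℚ :=
  fun e => if ∃ j, e = Finsupp.single (k, j) n then 1 else 0

/-- The pure tensor power-sum basis element `p_σ^⊗ = Π_{k≥1} p_{σ|_k}(x_{k*})`,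
where the type `σ` is recorded by its partitions `σ|_k` (`σ k` is the multiset of
multiplicities of the degree-`k` blocks of `σ`). -/
noncomputable def pTensor (σ : ℕ+ → Multiset ℕ) : MvPowerSeries (ℕ+ × ℕ) ℚ :=
  ∏ᶠ k : ℕ+, ((σ k).map (pIn k)).prod

/-- `P_{d^m} = Σ_{k | d} k · p_{dm/k}(x_{k*})`. -/
noncomputable def PPb (d m : ℕ) : MvPowerSeries (ℕ+ × ℕ) ℚ :=
  ∑ k ∈ d.divisors.attach,
    (k.1 : ℚ) • pIn ⟨k.1, Nat.pos_of_mem_divisors k.2⟩ (d * m / k.1)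

lemma pTensor_mul_pIn (σ : ℕ+ → Multiset ℕ) (hσfin : {k | σ k ≠ 0}.Finite)
    (k₀ : ℕ+) (n : ℕ) :
    pTensor σ * pIn k₀ n = pTensor (Function.update σ k₀ (n ::ₘ σ k₀)) := by
  classical
  set S : Finset ℕ+ := insert k₀ hσfin.toFinset with hS
  have hk₀S : k₀ ∈ S := by simp [hS]
  have h1 : pTensor σ = ∏ k ∈ S, ((σ k).map (pIn k)).prod := by
    refine finprod_eq_prod_of_mulSupport_subset _ ?_
    intro k hk
    simp only [Function.mulSupport, Set.mem_setOf_eq] at hk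
    by_contra hkS
    have : σ k = 0 := by
      by_contra h
      exact hkS (by simp [hS, Set.Finite.mem_toFinset, h])
    simp [this] at hk
  have h2 : pTensor (Function.update σ k₀ (n ::ₘ σ k₀)) =
      ∏ k ∈ S, ((Function.update σ k₀ (n ::ₘ σ k₀) k).map (pIn k)).prod := by
    refine finprod_eq_prod_of_mulSupport_subset _ ?_
    intro k hk
    simp only [Function.mulSupport, Set.mem_setOf_eq] at hk
    by_contra hkS
    have hkne : k ≠ k₀ := by rintro rfl; exact hkS hk₀S
    have : σ k = 0 := by
      by_contra h
      exact hkS (by simp [hS, Set.Finite.mem_toFinset, h])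
    rw [Function.update_of_ne hkne] at hk
    simp [this] at hk
  rw [h1, h2, ← Finset.prod_erase_mul _ _ hk₀S, ← Finset.prod_erase_mul _ _ hk₀S]
  have he : ∏ k ∈ S.erase k₀, ((Function.update σ k₀ (n ::ₘ σ k₀) k).map (pIn k)).prod
      = ∏ k ∈ S.erase k₀, ((σ k).map (pIn k)).prod :=
    Finset.prod_congr rfl fun k hk => by
      rw [Function.update_of_ne (Finset.ne_of_mem_erase hk)]
  rw [he, Function.update_self, Multiset.map_cons, Multiset.prod_cons]
  ring

theorem p_mul_P_block (mu : Multiset ℕ) (hmu : ∀ i ∈ mu, 0 < i)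
    (d m : ℕ) (hd : 0 < d) (hm : 0 < m)
    (σ : ℕ+ → Multiset ℕ) (hσfin : {k | σ k ≠ 0}.Finite)
    (hσpos : ∀ k, ∀ i ∈ σ k, 0 < i) :
    ((mu.map pS).prod * pS (d * m) = (((d * m) ::ₘ mu).map pS).prod) ∧
    (pTensor σ * PPb d m = ∑ k ∈ d.divisors.attach,
      (k.1 : ℚ) • pTensor (Function.update σ ⟨k.1, Nat.pos_of_mem_divisors k.2⟩
        ((d * m / k.1) ::ₘ σ ⟨k.1, Nat.pos_of_mem_divisors k.2⟩))) := by
  constructor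
  · rw [Multiset.map_cons, Multiset.prod_cons, mul_comm]
  · rw [PPb, Finset.mul_sum]
    refine Finset.sum_congr rfl fun k _ => ?_
    rw [mul_smul_comm]; exact congrArg _ (pTensor_mul_pIn σ hσfin _ _)
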